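/- Every directed co-graph is a twin-distance-hereditary digraph. -/
import Mathlib


/-- Arc relation of the induced subdigraph on a vertex set `S`. -/
def restrict (A : ℕ → ℕ → Prop) (S : Finset ℕ) : ℕ → ℕ → Prop :=
  fun x y => A x y ∧ x ∈ S ∧ y ∈ S

/-- `walkLen A n u v`: there is a directed walk of length `n` from `u` to `v`. -/
def walkLen (A : ℕ → ℕ → Prop) : ℕ → ℕ → ℕ → Prop
  | 0, u, v => u = v
  | n + 1, u, v => ∃ w, A u w ∧ walkLen A n w v

/-- `v` is reachable from `u` by a directed walk. -/
def Reach (A : ℕ → ℕ → Prop) (u v : ℕ) : Prop :=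
  ∃ n, walkLen A n u v

/-- Directed distance: length of a shortest directed walk (= shortest directed path). -/
noncomputable def ddist (A : ℕ → ℕ → Prop) (u v : ℕ) : ℕ :=
  sInf {n | walkLen A n u v}

/-- `x` and `y` are directed twins: `N⁻(x)\{y} = N⁻(y)\{x}` and `N⁺(x)\{y} = N⁺(y)\{x}`. -/
def DTwins (A : ℕ → ℕ → Prop) (x y : ℕ) : Prop :=
  x ≠ y ∧
    {w | A w x} \ {y} = {w | A w y} \ {x} ∧
    {w | A x w} \ {y} = {w | A y w} \ {x}

/-- The arc relation obtained by adding a new vertex `u` as a directed twin of `v`;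
`auv`, `avu` determine which of the arcs `(u,v)`, `(v,u)` are present (any of the
four adjacency patterns between the twins). -/
def twinArc (A : ℕ → ℕ → Prop) (v u : ℕ) (auv avu : Prop) : ℕ → ℕ → Prop :=
  fun x y => A x y ∨ (x = u ∧ y = v ∧ auv) ∨ (x = v ∧ y = u ∧ avu) ∨
    (x = u ∧ A v y) ∨ (y = u ∧ A x v)

/-- Directed co-graphs: single vertices, disjoint union, series and order composition. -/
inductive DCo : Finset ℕ → (ℕ → ℕ → Prop) → Prop
  | single (v : ℕ) : DCo {v} (fun _ _ => False)
  | union {V₁ V₂ : Finset ℕ} {A₁ A₂ : ℕ → ℕ → Prop} :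
      Disjoint V₁ V₂ → DCo V₁ A₁ → DCo V₂ A₂ →
      DCo (V₁ ∪ V₂) (fun x y => A₁ x y ∨ A₂ x y)
  | series {V₁ V₂ : Finset ℕ} {A₁ A₂ : ℕ → ℕ → Prop} :
      Disjoint V₁ V₂ → DCo V₁ A₁ → DCo V₂ A₂ →
      DCo (V₁ ∪ V₂)
        (fun x y => A₁ x y ∨ A₂ x y ∨ (x ∈ V₁ ∧ y ∈ V₂) ∨ (x ∈ V₂ ∧ y ∈ V₁))
  | order {V₁ V₂ : Finset ℕ} {A₁ A₂ : ℕ → ℕ → Prop} :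
      Disjoint V₁ V₂ → DCo V₁ A₁ → DCo V₂ A₂ →
      DCo (V₁ ∪ V₂) (fun x y => A₁ x y ∨ A₂ x y ∨ (x ∈ V₁ ∧ y ∈ V₂))

/-- Extended directed co-graphs: additionally closed under directed union. -/
inductive ExtDCo : Finset ℕ → (ℕ → ℕ → Prop) → Prop
  | single (v : ℕ) : ExtDCo {v} (fun _ _ => False)
  | union {V₁ V₂ : Finset ℕ} {A₁ A₂ : ℕ → ℕ → Prop} :
      Disjoint V₁ V₂ → ExtDCo V₁ A₁ → ExtDCo V₂ A₂ →
      ExtDCo (V₁ ∪ V₂) (fun x y => A₁ x y ∨ A₂ x y)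
  | series {V₁ V₂ : Finset ℕ} {A₁ A₂ : ℕ → ℕ → Prop} :
      Disjoint V₁ V₂ → ExtDCo V₁ A₁ → ExtDCo V₂ A₂ →
      ExtDCo (V₁ ∪ V₂)
        (fun x y => A₁ x y ∨ A₂ x y ∨ (x ∈ V₁ ∧ y ∈ V₂) ∨ (x ∈ V₂ ∧ y ∈ V₁))
  | order {V₁ V₂ : Finset ℕ} {A₁ A₂ : ℕ → ℕ → Prop} :
      Disjoint V₁ V₂ → ExtDCo V₁ A₁ → ExtDCo V₂ A₂ →
      ExtDCo (V₁ ∪ V₂) (fun x y => A₁ x y ∨ A₂ x y ∨ (x ∈ V₁ ∧ y ∈ V₂))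
  | dUnion {V₁ V₂ : Finset ℕ} {A₁ A₂ : ℕ → ℕ → Prop} (R : ℕ → ℕ → Prop) :
      Disjoint V₁ V₂ → ExtDCo V₁ A₁ → ExtDCo V₂ A₂ →
      ExtDCo (V₁ ∪ V₂) (fun x y => A₁ x y ∨ A₂ x y ∨ (x ∈ V₁ ∧ y ∈ V₂ ∧ R x y))

/-- Digraphs constructible from single vertices by disjoint union and adding directed twins. -/
inductive TwinBuilt : Finset ℕ → (ℕ → ℕ → Prop) → Prop
  | single (v : ℕ) : TwinBuilt {v} (fun _ _ => False)
  | union {V₁ V₂ : Finset ℕ} {A₁ A₂ : ℕ → ℕ → Prop} :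
      Disjoint V₁ V₂ → TwinBuilt V₁ A₁ → TwinBuilt V₂ A₂ →
      TwinBuilt (V₁ ∪ V₂) (fun x y => A₁ x y ∨ A₂ x y)
  | twin {V : Finset ℕ} {A : ℕ → ℕ → Prop} (v u : ℕ) (auv avu : Prop) :
      v ∈ V → u ∉ V → TwinBuilt V A →
      TwinBuilt (insert u V) (twinArc A v u auv avu)

/-- Twin-distance-hereditary digraphs: built from a single vertex by disjoint union,
adding directed twins, and adding pendant plus / pendant minus vertices. -/
inductive TwinDH : Finset ℕ → (ℕ → ℕ → Prop) → Prop
  | single (v : ℕ) : TwinDH {v} (fun _ _ => False)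
  | union {V₁ V₂ : Finset ℕ} {A₁ A₂ : ℕ → ℕ → Prop} :
      Disjoint V₁ V₂ → TwinDH V₁ A₁ → TwinDH V₂ A₂ →
      TwinDH (V₁ ∪ V₂) (fun x y => A₁ x y ∨ A₂ x y)
  | twin {V : Finset ℕ} {A : ℕ → ℕ → Prop} (v u : ℕ) (auv avu : Prop) :
      v ∈ V → u ∉ V → TwinDH V A →
      TwinDH (insert u V) (twinArc A v u auv avu)
  | pendPlus {V : Finset ℕ} {A : ℕ → ℕ → Prop} (a u : ℕ) :
      a ∈ V → u ∉ V → TwinDH V A →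
      TwinDH (insert u V) (fun x y => A x y ∨ (x = u ∧ y = a))
  | pendMinus {V : Finset ℕ} {A : ℕ → ℕ → Prop} (a u : ℕ) :
      a ∈ V → u ∉ V → TwinDH V A →
      TwinDH (insert u V) (fun x y => A x y ∨ (x = a ∧ y = u))

/-- Undirected distance-hereditary graphs, via the recursive characterization:
built from a single vertex by pendant vertices, false twins and true twins. -/
inductive UDH : Finset ℕ → (ℕ → ℕ → Prop) → Prop
  | single (v : ℕ) : UDH {v} (fun _ _ => False)
  | pendant {V : Finset ℕ} {E : ℕ → ℕ → Prop} (a u : ℕ) :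
      a ∈ V → u ∉ V → UDH V E →
      UDH (insert u V) (fun x y => E x y ∨ (x = u ∧ y = a) ∨ (x = a ∧ y = u))
  | falseTwin {V : Finset ℕ} {E : ℕ → ℕ → Prop} (v u : ℕ) :
      v ∈ V → u ∉ V → UDH V E →
      UDH (insert u V) (fun x y => E x y ∨ (x = u ∧ E v y) ∨ (y = u ∧ E x v))
  | trueTwin {V : Finset ℕ} {E : ℕ → ℕ → Prop} (v u : ℕ) :
      v ∈ V → u ∉ V → UDH V E →
      UDH (insert u V)
        (fun x y => E x y ∨ (x = u ∧ E v y) ∨ (y = u ∧ E x v) ∨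
          (x = u ∧ y = v) ∨ (x = v ∧ y = u))

/-- The induced subdigraph on `C` is strongly connected. -/
def StronglyConn (A : ℕ → ℕ → Prop) (C : Finset ℕ) : Prop :=
  ∀ u ∈ C, ∀ v ∈ C, Reach (restrict A C) u v

/-- `C` is a strong component of the digraph with vertex set `V` and arcs `A`. -/
def IsStrongComponent (A : ℕ → ℕ → Prop) (V C : Finset ℕ) : Prop :=
  C.Nonempty ∧ C ⊆ V ∧ StronglyConn A C ∧
    ∀ D, C ⊆ D → D ⊆ V → StronglyConn A D → D = C

/-- The induced subdigraph on `S` is weakly connected. -/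
def WeaklyConn (A : ℕ → ℕ → Prop) (S : Finset ℕ) : Prop :=
  S.Nonempty ∧ ∀ u ∈ S, ∀ v ∈ S,
    Relation.ReflTransGen (fun x y => restrict A S x y ∨ restrict A S y x) u v

/-- The induced subdigraph on `V` is acyclic. -/
def AcyclicOn (A : ℕ → ℕ → Prop) (V : Finset ℕ) : Prop :=
  ∀ v ∈ V, ∀ n, 0 < n → ¬ walkLen (restrict A V) n v v

/-- `CRle A V r`: the cycle rank of the digraph `(V, A)` is at most `r`.
This is the standard recursive definition: acyclic digraphs have rank 0, digraphs
decompose into their strong components, and deleting a vertex decreases rank by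
at most one. -/
inductive CRle (A : ℕ → ℕ → Prop) : Finset ℕ → ℕ → Prop
  | base {V : Finset ℕ} {r : ℕ} : AcyclicOn A V → CRle A V r
  | scc {V : Finset ℕ} {r : ℕ} :
      (∀ C, IsStrongComponent A V C → CRle A C r) → CRle A V r
  | step {V : Finset ℕ} {r : ℕ} (v : ℕ) :
      v ∈ V → CRle A (V.erase v) r → CRle A V (r + 1)

/-- The cycle rank of the digraph `(V, A)`. -/
noncomputable def cycleRank (A : ℕ → ℕ → Prop) (V : Finset ℕ) : ℕ :=
  sInf {r | CRle A V r}

/-- `CW k V A f`: the `k`-labeled digraph with vertices `V`, arcs `A` and labeling `f`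
is constructible by a directed clique-width `k`-expression. -/
inductive CW (k : ℕ) : Finset ℕ → (ℕ → ℕ → Prop) → (ℕ → Fin k) → Prop
  | vertex (v : ℕ) (a : Fin k) : CW k {v} (fun _ _ => False) (fun _ => a)
  | union {V₁ V₂ : Finset ℕ} {A₁ A₂ : ℕ → ℕ → Prop} {f₁ f₂ : ℕ → Fin k} :
      Disjoint V₁ V₂ → CW k V₁ A₁ f₁ → CW k V₂ A₂ f₂ →
      CW k (V₁ ∪ V₂) (fun x y => A₁ x y ∨ A₂ x y)
        (fun x => if x ∈ V₁ then f₁ x else f₂ x)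
  | addArcs {V : Finset ℕ} {A : ℕ → ℕ → Prop} {f : ℕ → Fin k} (a b : Fin k) :
      a ≠ b → CW k V A f →
      CW k V (fun x y => A x y ∨ (x ∈ V ∧ y ∈ V ∧ f x = a ∧ f y = b)) f
  | relabel {V : Finset ℕ} {A : ℕ → ℕ → Prop} {f : ℕ → Fin k} (a b : Fin k) :
      CW k V A f →
      CW k V A (fun x => if f x = a then b else f x)

set_option maxHeartbeats 1600000

lemma DCo.congr {V : Finset ℕ} {A B : ℕ → ℕ → Prop} (h : DCo V A)
    (e : ∀ x y, A x y ↔ B x y) : DCo V B := by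
  have : A = B := funext fun x => funext fun y => propext (e x y)
  rwa [this] at h

lemma TwinDH.congr {V : Finset ℕ} {A B : ℕ → ℕ → Prop} (h : TwinDH V A)
    (e : ∀ x y, A x y ↔ B x y) : TwinDH V B := by
  have : A = B := funext fun x => funext fun y => propext (e x y)
  rwa [this] at h

lemma DCo.bound {V : Finset ℕ} {A : ℕ → ℕ → Prop} (h : DCo V A) :
    ∀ x y, A x y → x ∈ V ∧ y ∈ V := by
  induction h with
  | single v => exact fun x y h => h.elim
  | union d h1 h2 ih1 ih2 =>
      intro x y h
      simp only [Finset.mem_union]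
      rcases h with h | h
      · exact ⟨Or.inl (ih1 x y h).1, Or.inl (ih1 x y h).2⟩
      · exact ⟨Or.inr (ih2 x y h).1, Or.inr (ih2 x y h).2⟩
  | series d h1 h2 ih1 ih2 =>
      intro x y h
      simp only [Finset.mem_union]
      rcases h with h | h | h | h
      · exact ⟨Or.inl (ih1 x y h).1, Or.inl (ih1 x y h).2⟩
      · exact ⟨Or.inr (ih2 x y h).1, Or.inr (ih2 x y h).2⟩
      · exact ⟨Or.inl h.1, Or.inr h.2⟩
      · exact ⟨Or.inr h.1, Or.inl h.2⟩
  | order d h1 h2 ih1 ih2 =>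
      intro x y h
      simp only [Finset.mem_union]
      rcases h with h | h | h
      · exact ⟨Or.inl (ih1 x y h).1, Or.inl (ih1 x y h).2⟩
      · exact ⟨Or.inr (ih2 x y h).1, Or.inr (ih2 x y h).2⟩
      · exact ⟨Or.inl h.1, Or.inr h.2⟩

lemma DCo.loopless {V : Finset ℕ} {A : ℕ → ℕ → Prop} (h : DCo V A) :
    ∀ x, ¬ A x x := by
  induction h with
  | single v => exact fun x h => h
  | union d h1 h2 ih1 ih2 =>
      intro x h; rcases h with h | h
      · exact ih1 x h
      · exact ih2 x h
  | series d h1 h2 ih1 ih2 =>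
      intro x h; rcases h with h | h | h | h
      · exact ih1 x h
      · exact ih2 x h
      · exact Finset.disjoint_left.mp d h.1 h.2
      · exact Finset.disjoint_left.mp d h.2 h.1
  | order d h1 h2 ih1 ih2 =>
      intro x h; rcases h with h | h | h
      · exact ih1 x h
      · exact ih2 x h
      · exact Finset.disjoint_left.mp d h.1 h.2

lemma DCo.nonempty {V : Finset ℕ} {A : ℕ → ℕ → Prop} (h : DCo V A) :
    V.Nonempty := by
  induction h with
  | single v => exact ⟨v, Finset.mem_singleton_self v⟩
  | union d h1 h2 ih1 ih2 => exact ih1.mono Finset.subset_union_left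
  | series d h1 h2 ih1 ih2 => exact ih1.mono Finset.subset_union_left
  | order d h1 h2 ih1 ih2 => exact ih1.mono Finset.subset_union_left

lemma DCo.erase' {V : Finset ℕ} {A : ℕ → ℕ → Prop} (h : DCo V A) :
    ∀ u, (V.erase u).Nonempty → DCo (V.erase u) (restrict A (V.erase u)) := by
  induction h with
  | single v =>
      intro u hne
      by_cases hu : u = v
      · subst hu; simp at hne
      · have hE : ({v} : Finset ℕ).erase u = {v} :=
          Finset.erase_eq_of_notMem (by simpa using hu)
        rw [hE]
        exact (DCo.single v).congr (by simp [restrict])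
  | @union V₁ V₂ A₁ A₂ d h1 h2 ih1 ih2 =>
      intro u hne
      have hb1 := h1.bound
      have hb2 := h2.bound
      rw [Finset.erase_union_distrib] at hne ⊢
      have d' : Disjoint (V₁.erase u) (V₂.erase u) :=
        d.mono (Finset.erase_subset _ _) (Finset.erase_subset _ _)
      by_cases e1 : (V₁.erase u).Nonempty
      · by_cases e2 : (V₂.erase u).Nonempty
        · refine (DCo.union d' (ih1 u e1) (ih2 u e2)).congr ?_
          intro x y
          have b1 := hb1 x y
          have b2 := hb2 x y
          have dx : x ∈ V₁ → x ∉ V₂ := fun hx => Finset.disjoint_left.mp d hx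
          have dy : y ∈ V₁ → y ∉ V₂ := fun hy => Finset.disjoint_left.mp d hy
          simp only [restrict, Finset.mem_union, Finset.mem_erase]
          tauto
        · rw [Finset.not_nonempty_iff_eq_empty.mp e2, Finset.union_empty] at hne ⊢
          refine (ih1 u hne).congr ?_
          intro x y
          have b1 := hb1 x y
          have b2 := hb2 x y
          have dx : x ∈ V₁ → x ∉ V₂ := fun hx => Finset.disjoint_left.mp d hx
          have dy : y ∈ V₁ → y ∉ V₂ := fun hy => Finset.disjoint_left.mp d hy
          simp only [restrict, Finset.mem_erase]
          tauto
      · rw [Finset.not_nonempty_iff_eq_empty.mp e1, Finset.empty_union] at hne ⊢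
        refine (ih2 u hne).congr ?_
        intro x y
        have b1 := hb1 x y
        have b2 := hb2 x y
        have dx : x ∈ V₁ → x ∉ V₂ := fun hx => Finset.disjoint_left.mp d hx
        have dy : y ∈ V₁ → y ∉ V₂ := fun hy => Finset.disjoint_left.mp d hy
        simp only [restrict, Finset.mem_erase]
        tauto
  | @series V₁ V₂ A₁ A₂ d h1 h2 ih1 ih2 =>
      intro u hne
      have hb1 := h1.bound
      have hb2 := h2.bound
      rw [Finset.erase_union_distrib] at hne ⊢
      have d' : Disjoint (V₁.erase u) (V₂.erase u) :=
        d.mono (Finset.erase_subset _ _) (Finset.erase_subset _ _)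
      by_cases e1 : (V₁.erase u).Nonempty
      · by_cases e2 : (V₂.erase u).Nonempty
        · refine (DCo.series d' (ih1 u e1) (ih2 u e2)).congr ?_
          intro x y
          have b1 := hb1 x y
          have b2 := hb2 x y
          have dx : x ∈ V₁ → x ∉ V₂ := fun hx => Finset.disjoint_left.mp d hx
          have dy : y ∈ V₁ → y ∉ V₂ := fun hy => Finset.disjoint_left.mp d hy
          simp only [restrict, Finset.mem_union, Finset.mem_erase]
          tauto
        · rw [Finset.not_nonempty_iff_eq_empty.mp e2, Finset.union_empty] at hne ⊢
          refine (ih1 u hne).congr ?_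
          intro x y
          have b1 := hb1 x y
          have b2 := hb2 x y
          have dx : x ∈ V₁ → x ∉ V₂ := fun hx => Finset.disjoint_left.mp d hx
          have dy : y ∈ V₁ → y ∉ V₂ := fun hy => Finset.disjoint_left.mp d hy
          simp only [restrict, Finset.mem_erase]
          tauto
      · rw [Finset.not_nonempty_iff_eq_empty.mp e1, Finset.empty_union] at hne ⊢
        refine (ih2 u hne).congr ?_
        intro x y
        have b1 := hb1 x y
        have b2 := hb2 x y
        have dx : x ∈ V₁ → x ∉ V₂ := fun hx => Finset.disjoint_left.mp d hx
        have dy : y ∈ V₁ → y ∉ V₂ := fun hy => Finset.disjoint_left.mp d hy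
        simp only [restrict, Finset.mem_erase]
        tauto
  | @order V₁ V₂ A₁ A₂ d h1 h2 ih1 ih2 =>
      intro u hne
      have hb1 := h1.bound
      have hb2 := h2.bound
      rw [Finset.erase_union_distrib] at hne ⊢
      have d' : Disjoint (V₁.erase u) (V₂.erase u) :=
        d.mono (Finset.erase_subset _ _) (Finset.erase_subset _ _)
      by_cases e1 : (V₁.erase u).Nonempty
      · by_cases e2 : (V₂.erase u).Nonempty
        · refine (DCo.order d' (ih1 u e1) (ih2 u e2)).congr ?_
          intro x y
          have b1 := hb1 x y
          have b2 := hb2 x y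
          have dx : x ∈ V₁ → x ∉ V₂ := fun hx => Finset.disjoint_left.mp d hx
          have dy : y ∈ V₁ → y ∉ V₂ := fun hy => Finset.disjoint_left.mp d hy
          simp only [restrict, Finset.mem_union, Finset.mem_erase]
          tauto
        · rw [Finset.not_nonempty_iff_eq_empty.mp e2, Finset.union_empty] at hne ⊢
          refine (ih1 u hne).congr ?_
          intro x y
          have b1 := hb1 x y
          have b2 := hb2 x y
          have dx : x ∈ V₁ → x ∉ V₂ := fun hx => Finset.disjoint_left.mp d hx
          have dy : y ∈ V₁ → y ∉ V₂ := fun hy => Finset.disjoint_left.mp d hy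
          simp only [restrict, Finset.mem_erase]
          tauto
      · rw [Finset.not_nonempty_iff_eq_empty.mp e1, Finset.empty_union] at hne ⊢
        refine (ih2 u hne).congr ?_
        intro x y
        have b1 := hb1 x y
        have b2 := hb2 x y
        have dx : x ∈ V₁ → x ∉ V₂ := fun hx => Finset.disjoint_left.mp d hx
        have dy : y ∈ V₁ → y ∉ V₂ := fun hy => Finset.disjoint_left.mp d hy
        simp only [restrict, Finset.mem_erase]
        tauto

lemma DCo.twinpair {V : Finset ℕ} {A : ℕ → ℕ → Prop} (h : DCo V A) :
    2 ≤ V.card →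
    ∃ u v, u ∈ V ∧ v ∈ V ∧ u ≠ v ∧ (∀ y, y ≠ u → y ≠ v → (A u y ↔ A v y)) ∧
      (∀ x, x ≠ u → x ≠ v → (A x u ↔ A x v)) := by
  induction h with
  | single v => intro h2; simp at h2
  | @union V₁ V₂ A₁ A₂ d h1 h2 ih1 ih2 =>
      intro _
      have hb1 := h1.bound
      have hb2 := h2.bound
      have hbig := (DCo.union d h1 h2).bound
      by_cases c1 : 2 ≤ V₁.card
      · obtain ⟨u, v, hu, hv, huv, hout, hin⟩ := ih1 c1
        have hu2 : u ∉ V₂ := Finset.disjoint_left.mp d hu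
        have hv2 : v ∉ V₂ := Finset.disjoint_left.mp d hv
        refine ⟨u, v, Finset.mem_union_left _ hu, Finset.mem_union_left _ hv, huv, ?_, ?_⟩
        · intro y hyu hyv
          have ht := hout y hyu hyv
          have b2u := hb2 u y
          have b2v := hb2 v y
          tauto
        · intro x hxu hxv
          have ht := hin x hxu hxv
          have b2u := hb2 x u
          have b2v := hb2 x v
          tauto
      · by_cases c2 : 2 ≤ V₂.card
        · obtain ⟨u, v, hu, hv, huv, hout, hin⟩ := ih2 c2
          have hu1 : u ∉ V₁ := Finset.disjoint_right.mp d hu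
          have hv1 : v ∉ V₁ := Finset.disjoint_right.mp d hv
          refine ⟨u, v, Finset.mem_union_right _ hu, Finset.mem_union_right _ hv, huv, ?_, ?_⟩
          · intro y hyu hyv
            have ht := hout y hyu hyv
            have b1u := hb1 u y
            have b1v := hb1 v y
            tauto
          · intro x hxu hxv
            have ht := hin x hxu hxv
            have b1u := hb1 x u
            have b1v := hb1 x v
            tauto
        · have hc1 : V₁.card = 1 :=
            le_antisymm (by omega) (Finset.card_pos.mpr h1.nonempty)
          have hc2 : V₂.card = 1 :=
            le_antisymm (by omega) (Finset.card_pos.mpr h2.nonempty)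
          obtain ⟨a, rfl⟩ := Finset.card_eq_one.mp hc1
          obtain ⟨b, rfl⟩ := Finset.card_eq_one.mp hc2
          have hab : a ≠ b := by
            intro hab
            exact Finset.disjoint_left.mp d (Finset.mem_singleton_self a)
              (hab ▸ Finset.mem_singleton_self a)
          refine ⟨a, b, by simp, by simp, hab, ?_, ?_⟩
          · intro y hya hyb
            constructor <;> intro hA
            · have := (hbig _ _ hA).2
              simp [Finset.mem_union] at this
              tauto
            · have := (hbig _ _ hA).2
              simp [Finset.mem_union] at this
              tauto
          · intro x hxa hxb
            constructor <;> intro hA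
            · have := (hbig _ _ hA).1
              simp [Finset.mem_union] at this
              tauto
            · have := (hbig _ _ hA).1
              simp [Finset.mem_union] at this
              tauto
  | @series V₁ V₂ A₁ A₂ d h1 h2 ih1 ih2 =>
      intro _
      have hb1 := h1.bound
      have hb2 := h2.bound
      have hbig := (DCo.series d h1 h2).bound
      by_cases c1 : 2 ≤ V₁.card
      · obtain ⟨u, v, hu, hv, huv, hout, hin⟩ := ih1 c1
        have hu2 : u ∉ V₂ := Finset.disjoint_left.mp d hu
        have hv2 : v ∉ V₂ := Finset.disjoint_left.mp d hv
        refine ⟨u, v, Finset.mem_union_left _ hu, Finset.mem_union_left _ hv, huv, ?_, ?_⟩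
        · intro y hyu hyv
          have ht := hout y hyu hyv
          have b2u := hb2 u y
          have b2v := hb2 v y
          tauto
        · intro x hxu hxv
          have ht := hin x hxu hxv
          have b2u := hb2 x u
          have b2v := hb2 x v
          tauto
      · by_cases c2 : 2 ≤ V₂.card
        · obtain ⟨u, v, hu, hv, huv, hout, hin⟩ := ih2 c2
          have hu1 : u ∉ V₁ := Finset.disjoint_right.mp d hu
          have hv1 : v ∉ V₁ := Finset.disjoint_right.mp d hv
          refine ⟨u, v, Finset.mem_union_right _ hu, Finset.mem_union_right _ hv, huv, ?_, ?_⟩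
          · intro y hyu hyv
            have ht := hout y hyu hyv
            have b1u := hb1 u y
            have b1v := hb1 v y
            tauto
          · intro x hxu hxv
            have ht := hin x hxu hxv
            have b1u := hb1 x u
            have b1v := hb1 x v
            tauto
        · have hc1 : V₁.card = 1 :=
            le_antisymm (by omega) (Finset.card_pos.mpr h1.nonempty)
          have hc2 : V₂.card = 1 :=
            le_antisymm (by omega) (Finset.card_pos.mpr h2.nonempty)
          obtain ⟨a, rfl⟩ := Finset.card_eq_one.mp hc1
          obtain ⟨b, rfl⟩ := Finset.card_eq_one.mp hc2
          have hab : a ≠ b := by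
            intro hab
            exact Finset.disjoint_left.mp d (Finset.mem_singleton_self a)
              (hab ▸ Finset.mem_singleton_self a)
          refine ⟨a, b, by simp, by simp, hab, ?_, ?_⟩
          · intro y hya hyb
            constructor <;> intro hA
            · have := (hbig _ _ hA).2
              simp [Finset.mem_union] at this
              tauto
            · have := (hbig _ _ hA).2
              simp [Finset.mem_union] at this
              tauto
          · intro x hxa hxb
            constructor <;> intro hA
            · have := (hbig _ _ hA).1
              simp [Finset.mem_union] at this
              tauto
            · have := (hbig _ _ hA).1
              simp [Finset.mem_union] at this
              tauto
  | @order V₁ V₂ A₁ A₂ d h1 h2 ih1 ih2 =>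
      intro _
      have hb1 := h1.bound
      have hb2 := h2.bound
      have hbig := (DCo.order d h1 h2).bound
      by_cases c1 : 2 ≤ V₁.card
      · obtain ⟨u, v, hu, hv, huv, hout, hin⟩ := ih1 c1
        have hu2 : u ∉ V₂ := Finset.disjoint_left.mp d hu
        have hv2 : v ∉ V₂ := Finset.disjoint_left.mp d hv
        refine ⟨u, v, Finset.mem_union_left _ hu, Finset.mem_union_left _ hv, huv, ?_, ?_⟩
        · intro y hyu hyv
          have ht := hout y hyu hyv
          have b2u := hb2 u y
          have b2v := hb2 v y
          tauto
        · intro x hxu hxv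
          have ht := hin x hxu hxv
          have b2u := hb2 x u
          have b2v := hb2 x v
          tauto
      · by_cases c2 : 2 ≤ V₂.card
        · obtain ⟨u, v, hu, hv, huv, hout, hin⟩ := ih2 c2
          have hu1 : u ∉ V₁ := Finset.disjoint_right.mp d hu
          have hv1 : v ∉ V₁ := Finset.disjoint_right.mp d hv
          refine ⟨u, v, Finset.mem_union_right _ hu, Finset.mem_union_right _ hv, huv, ?_, ?_⟩
          · intro y hyu hyv
            have ht := hout y hyu hyv
            have b1u := hb1 u y
            have b1v := hb1 v y
            tauto
          · intro x hxu hxv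
            have ht := hin x hxu hxv
            have b1u := hb1 x u
            have b1v := hb1 x v
            tauto
        · have hc1 : V₁.card = 1 :=
            le_antisymm (by omega) (Finset.card_pos.mpr h1.nonempty)
          have hc2 : V₂.card = 1 :=
            le_antisymm (by omega) (Finset.card_pos.mpr h2.nonempty)
          obtain ⟨a, rfl⟩ := Finset.card_eq_one.mp hc1
          obtain ⟨b, rfl⟩ := Finset.card_eq_one.mp hc2
          have hab : a ≠ b := by
            intro hab
            exact Finset.disjoint_left.mp d (Finset.mem_singleton_self a)
              (hab ▸ Finset.mem_singleton_self a)
          refine ⟨a, b, by simp, by simp, hab, ?_, ?_⟩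
          · intro y hya hyb
            constructor <;> intro hA
            · have := (hbig _ _ hA).2
              simp [Finset.mem_union] at this
              tauto
            · have := (hbig _ _ hA).2
              simp [Finset.mem_union] at this
              tauto
          · intro x hxa hxb
            constructor <;> intro hA
            · have := (hbig _ _ hA).1
              simp [Finset.mem_union] at this
              tauto
            · have := (hbig _ _ hA).1
              simp [Finset.mem_union] at this
              tauto

lemma dco_to_twindh : ∀ n (V : Finset ℕ) (A : ℕ → ℕ → Prop),
    V.card ≤ n → DCo V A → TwinDH V A := by
  intro n
  induction n with
  | zero =>
      intro V A hc h
      obtain ⟨a, ha⟩ := h.nonempty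
      rw [Nat.le_zero, Finset.card_eq_zero] at hc
      subst hc
      simp at ha
  | succ n ih =>
      intro V A hc h
      by_cases h2 : 2 ≤ V.card
      · obtain ⟨u, v, hu, hv, huv, hout, hin⟩ := h.twinpair h2
        have hb := h.bound
        have hl := h.loopless
        have hvV' : v ∈ V.erase u := Finset.mem_erase.mpr ⟨Ne.symm huv, hv⟩
        have hD' : DCo (V.erase u) (restrict A (V.erase u)) := h.erase' u ⟨v, hvV'⟩
        have hcard : (V.erase u).card ≤ n := by
          have := Finset.card_erase_of_mem hu
          omega
        have hT' := ih (V.erase u) _ hcard hD'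
        have hstep := TwinDH.twin v u (A u v) (A v u) hvV' (Finset.notMem_erase u V) hT'
        rw [Finset.insert_erase hu] at hstep
        refine hstep.congr ?_
        intro x y
        simp only [twinArc, restrict, Finset.mem_erase]
        constructor
        · rintro (⟨hxy, _, _⟩ | ⟨rfl, rfl, hA⟩ | ⟨rfl, rfl, hA⟩ |
            ⟨rfl, hA, ⟨hvu, _⟩, hyu, hyV⟩ | ⟨rfl, hA, ⟨hxu, hxV⟩, _, _⟩)
          · exact hxy
          · exact hA
          · exact hA
          · by_cases hyv : y = v
            · exact absurd (hyv ▸ hA) (hl v)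
            · exact (hout y hyu hyv).mpr hA
          · by_cases hxv : x = v
            · exact absurd (hxv ▸ hA) (hl v)
            · exact (hin x hxu hxv).mpr hA
        · intro hA
          have hxV := (hb _ _ hA).1
          have hyV := (hb _ _ hA).2
          by_cases hxu : x = u
          · by_cases hyu : y = u
            · exfalso; rw [hxu, hyu] at hA; exact hl u hA
            · by_cases hyv : y = v
              · exact Or.inr (Or.inl ⟨hxu, hyv, by rwa [hxu, hyv] at hA⟩)
              · exact Or.inr (Or.inr (Or.inr (Or.inl ⟨hxu,
                  (hout y hyu hyv).mp (by rwa [hxu] at hA),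
                  ⟨Ne.symm huv, hv⟩, hyu, hyV⟩)))
          · by_cases hyu : y = u
            · by_cases hxv : x = v
              · exact Or.inr (Or.inr (Or.inl ⟨hxv, hyu, by rwa [hxv, hyu] at hA⟩))
              · exact Or.inr (Or.inr (Or.inr (Or.inr ⟨hyu,
                  (hin x hxu hxv).mp (by rwa [hyu] at hA),
                  ⟨hxu, hxV⟩, Ne.symm huv, hv⟩)))
            · exact Or.inl ⟨hA, ⟨hxu, hxV⟩, hyu, hyV⟩
      · have h1 : V.card = 1 :=
          le_antisymm (by omega) (Finset.card_pos.mpr h.nonempty)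
        obtain ⟨v, rfl⟩ := Finset.card_eq_one.mp h1
        refine (TwinDH.single v).congr ?_
        intro x y
        constructor
        · intro h'; exact h'.elim
        · intro hA
          have hb := h.bound x y hA
          simp only [Finset.mem_singleton] at hb
          obtain ⟨hx, hy⟩ := hb
          rw [hx, hy] at hA
          exact h.loopless v hA

theorem stmt_2 (V : Finset ℕ) (A : ℕ → ℕ → Prop) (h : DCo V A) :
    TwinDH V A := dco_to_twindh V.card V A le_rfl h
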